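/- Let Θ be a measurable space, K ≥ 1, let μ_pr be a probability measure on Θ and μ_pr^K its K-fold product. Let π_1,…,π_K : Θ → [0,∞) be measurable with ∫ π_k dμ_pr = 1, μ_1 the measure with density π_1 with respect to μ_pr, and π(θ) := ∏_{k=1}^K π_k(θ_k). Let S_K be a subgroup of the symmetric group on {1,…,K}; for σ ∈ S_K set π_σ(θ) := ∏_k π_{σ(k)}(θ_k), π_W := (1/|S_K|) Σ_{σ∈S_K} π_σ, and let μ_W be the probability measure on Θ^K with density π_W with respect to μ_pr^K. Define the importance weight ŵ(θ,σ) := π(θ_σ)/π_W(θ_σ) when π_W(θ_σ) > 0 and 0 otherwise. Then for every measurable Q : Θ → ℝ with Q integrable with respect to μ_1, ∫_Θ Q dμ_1 = (1/|S_K|) Σ_{σ∈S_K} ∫_{Θ^K} Q(θ_{σ(1)}) ŵ(θ,σ) μ_W(dθ). -/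

import Mathlib

open MeasureTheory ENNReal

private lemma wgpt_aux_pi_prod {Θ : Type*} [MeasurableSpace Θ] (K : ℕ)
    (μpr : Measure Θ) [IsProbabilityMeasure μpr] (f : Fin K → Θ → ℝ) :
    ∫ θ, ∏ i, f i (θ i) ∂(Measure.pi fun _ : Fin K => μpr) = ∏ i, ∫ x, f i x ∂μpr := by
  letI : MeasureSpace Θ := ⟨μpr⟩
  have h1 : (Measure.pi fun _ : Fin K => μpr) = (volume : Measure (Fin K → Θ)) := rfl
  have h2 : μpr = (volume : Measure Θ) := rfl
  rw [h1, h2]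
  exact integral_fintype_prod_eq_prod f

/-- the importance-sampling identity for Weighted Generalized
Parallel Tempering: for `Q` integrable w.r.t. `μ_1`,
`∫ Q dμ_1 = (1/|S_K|) ∑_{σ∈S_K} ∫ Q(θ_{σ(1)}) ŵ(θ,σ) μ_W(dθ)`. -/
theorem wgpt_importance_sampling_identity
    {Θ : Type*} [MeasurableSpace Θ] (K : ℕ) (hK : 0 < K)
    (μpr : Measure Θ) [IsProbabilityMeasure μpr]
    (μprK : Measure (Fin K → Θ)) (hμprK : μprK = Measure.pi fun _ => μpr)
    (πk : Fin K → Θ → ℝ≥0∞) (hπkm : ∀ k, Measurable (πk k))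
    (hπkfin : ∀ k x, πk k x ≠ ∞) (hπkint : ∀ k, ∫⁻ x, πk k x ∂μpr = 1)
    (μ1 : Measure Θ) (hμ1 : μ1 = μpr.withDensity (πk ⟨0, hK⟩))
    (π : (Fin K → Θ) → ℝ≥0∞) (hπ : ∀ θ, π θ = ∏ k, πk k (θ k))
    (SK : Finset (Equiv.Perm (Fin K)))
    (hSKid : 1 ∈ SK)
    (hSKinv : ∀ σ ∈ SK, σ⁻¹ ∈ SK)
    (hSKmul : ∀ σ ∈ SK, ∀ ρ ∈ SK, σ * ρ ∈ SK)
    (πσ : Equiv.Perm (Fin K) → (Fin K → Θ) → ℝ≥0∞)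
    (hπσ : ∀ σ θ, πσ σ θ = ∏ k, πk (σ k) (θ k))
    (πW : (Fin K → Θ) → ℝ≥0∞)
    (hπW : ∀ θ, πW θ = (SK.card : ℝ≥0∞)⁻¹ * ∑ σ ∈ SK, πσ σ θ)
    (μW : Measure (Fin K → Θ)) (hμW : μW = μprK.withDensity πW)
    (wh : (Fin K → Θ) → Equiv.Perm (Fin K) → ℝ)
    (hwh : ∀ θ σ, wh θ σ =
      if 0 < πW (fun i => θ (σ i)) then
        (π (fun i => θ (σ i)) / πW (fun i => θ (σ i))).toReal
      else 0) :
    ∀ Q : Θ → ℝ, Integrable Q μ1 →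
      ∫ x, Q x ∂μ1 =
        (SK.card : ℝ)⁻¹ * ∑ σ ∈ SK, ∫ θ, Q (θ (σ ⟨0, hK⟩)) * wh θ σ ∂μW := by
  classical
  intro Q _hQ
  set z : Fin K := ⟨0, hK⟩ with hz
  -- basic finiteness / measurability facts
  have hcard0 : SK.card ≠ 0 := Finset.card_ne_zero_of_mem hSKid
  have hπfin : ∀ θ, π θ ≠ ∞ := by
    intro θ; rw [hπ]
    exact ENNReal.prod_ne_top fun k _ => hπkfin k (θ k)
  have hπσfin : ∀ σ θ, πσ σ θ ≠ ∞ := by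
    intro σ θ; rw [hπσ]
    exact ENNReal.prod_ne_top fun k _ => hπkfin (σ k) (θ k)
  have hπWfin : ∀ θ, πW θ ≠ ∞ := by
    intro θ; rw [hπW]
    exact ENNReal.mul_ne_top (ENNReal.inv_ne_top.2 (Nat.cast_ne_zero.2 hcard0))
      (ENNReal.sum_lt_top.2 fun σ _ => lt_top_iff_ne_top.2 (hπσfin σ θ)).ne
  have hπσm : ∀ σ, Measurable (πσ σ) := by
    intro σ
    have : Measurable fun θ : Fin K → Θ => ∏ k, πk (σ k) (θ k) :=
      Finset.measurable_prod _ fun k _ => (hπkm (σ k)).comp (measurable_pi_apply k)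
    simpa [funext fun θ => hπσ σ θ] using this
  have hπWm : Measurable πW := by
    have : Measurable fun θ : Fin K → Θ => (SK.card : ℝ≥0∞)⁻¹ * ∑ σ ∈ SK, πσ σ θ :=
      (Finset.measurable_sum _ fun σ _ => hπσm σ).const_mul _
    simpa [funext fun θ => hπW θ] using this
  -- symmetry of πW
  have hsym : ∀ σ ∈ SK, ∀ θ : Fin K → Θ, πW (fun i => θ (σ i)) = πW θ := by
    intro σ hσ θ
    rw [hπW, hπW]
    congr 1
    refine Finset.sum_bij' (fun ρ _ => ρ * σ⁻¹) (fun ρ _ => ρ * σ) ?_ ?_ ?_ ?_ ?_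
    · intro ρ hρ; exact hSKmul ρ hρ σ⁻¹ (hSKinv σ hσ)
    · intro ρ hρ; exact hSKmul ρ hρ σ hσ
    · intro ρ _; simp [mul_assoc]
    · intro ρ _; simp [mul_assoc]
    · intro ρ _
      rw [hπσ, hπσ]
      rw [← Equiv.prod_comp σ (fun j => πk ((ρ * σ⁻¹) j) (θ j))]
      simp [Equiv.Perm.mul_apply]
  -- πW = 0 forces π = 0
  have hzero : ∀ θ : Fin K → Θ, πW θ = 0 → π θ = 0 := by
    intro θ h0
    rw [hπW] at h0
    have hsum : ∑ σ ∈ SK, πσ σ θ = 0 := by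
      rcases mul_eq_zero.1 h0 with h | h
      · exact absurd h (by simp [hcard0])
      · exact h
    have h1 : πσ 1 θ = 0 := (Finset.sum_eq_zero_iff.1 hsum) 1 hSKid
    rw [hπ]; rw [hπσ] at h1
    simpa using h1
  -- key pointwise identity
  have key : ∀ σ ∈ SK, ∀ θ : Fin K → Θ,
      wh θ σ * (πW θ).toReal = (π (fun i => θ (σ i))).toReal := by
    intro σ hσ θ
    rw [hwh]
    rcases eq_zero_or_pos (πW (fun i => θ (σ i))) with h0 | hpos
    · rw [if_neg (by simp [h0]), zero_mul, hzero _ h0, ENNReal.toReal_zero]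
    · rw [if_pos hpos, ← hsym σ hσ θ, ← ENNReal.toReal_mul,
        ENNReal.div_mul_cancel hpos.ne' (hπWfin _)]
  -- Step D: the base identity
  have int_one : ∀ i : Fin K, i ≠ z → (∫ x, (πk i x).toReal ∂μpr) = 1 := by
    intro i _
    rw [integral_toReal ((hπkm i).aemeasurable)
      (Filter.Eventually.of_forall fun x => lt_top_iff_ne_top.2 (hπkfin i x)),
      hπkint i, ENNReal.toReal_one]
  have hQz : (∫ x, Q x * (πk z x).toReal ∂μpr) = ∫ x, Q x ∂μ1 := by
    rw [hμ1]
    have : μpr.withDensity (πk z) =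
        μpr.withDensity (fun x => ((πk z x).toNNReal : ℝ≥0∞)) := by
      congr 1; funext x; exact (ENNReal.coe_toNNReal (hπkfin z x)).symm
    rw [this, integral_withDensity_eq_integral_smul (hπkm z).ennreal_toNNReal]
    congr 1; funext x
    simp [NNReal.smul_def, ENNReal.toReal, mul_comm]
  have hD : (∫ θ, Q (θ z) * (π θ).toReal ∂μprK) = ∫ x, Q x ∂μ1 := by
    rw [hμprK]
    calc ∫ θ : Fin K → Θ, Q (θ z) * (π θ).toReal ∂(Measure.pi fun _ => μpr)
        = ∫ θ : Fin K → Θ, ∏ i, ((if i = z then Q (θ i) else 1) * (πk i (θ i)).toReal)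
            ∂(Measure.pi fun _ => μpr) := by
          congr 1; funext θ
          rw [Finset.prod_mul_distrib, Finset.prod_ite_eq' Finset.univ z (fun i => Q (θ i)),
            if_pos (Finset.mem_univ z), hπ, ENNReal.toReal_prod]
      _ = ∏ i, ∫ x, (if i = z then Q x else 1) * (πk i x).toReal ∂μpr :=
          wgpt_aux_pi_prod K μpr
            (fun i x => (if i = z then Q x else 1) * (πk i x).toReal)
      _ = ∫ x, Q x * (πk z x).toReal ∂μpr := by
          rw [Finset.prod_eq_single z
            (fun i _ hi => by simp only [if_neg hi, one_mul]; exact int_one i hi)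
            (by simp)]
          simp
      _ = ∫ x, Q x ∂μ1 := hQz
  -- main computation for each σ
  have main : ∀ σ ∈ SK,
      (∫ θ, Q (θ (σ z)) * wh θ σ ∂μW) = ∫ x, Q x ∂μ1 := by
    intro σ hσ
    have hμW' : μW = μprK.withDensity (fun θ => ((πW θ).toNNReal : ℝ≥0∞)) := by
      rw [hμW]; congr 1; funext θ; exact (ENNReal.coe_toNNReal (hπWfin θ)).symm
    rw [hμW', integral_withDensity_eq_integral_smul hπWm.ennreal_toNNReal]
    have step1 : (∫ θ, (πW θ).toNNReal • (Q (θ (σ z)) * wh θ σ) ∂μprK)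
        = ∫ θ, Q (θ (σ z)) * (π (fun i => θ (σ i))).toReal ∂μprK := by
      congr 1; funext θ
      rw [← key σ hσ θ]
      simp only [NNReal.smul_def, smul_eq_mul, ENNReal.toReal]
      ring
    rw [step1]
    -- change of variables
    have hMP : MeasurePreserving
        (MeasurableEquiv.arrowCongr' (σ⁻¹ : Equiv.Perm (Fin K)) (MeasurableEquiv.refl Θ))
        μprK μprK := by
      rw [hμprK]
      exact measurePreserving_arrowCongr' (fun _ => μpr) (fun _ => μpr) _ _
        (fun _ => ⟨measurable_id, Measure.map_id⟩)
    have happ : ∀ θ : Fin K → Θ,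
        (MeasurableEquiv.arrowCongr' (σ⁻¹ : Equiv.Perm (Fin K)) (MeasurableEquiv.refl Θ)) θ
          = fun i => θ (σ i) := by
      intro θ
      funext i
      simp [MeasurableEquiv.arrowCongr', Equiv.arrowCongr', Equiv.arrowCongr, Equiv.Perm.inv_def]
    have := hMP.integral_comp' (fun η : Fin K → Θ => Q (η z) * (π η).toReal)
    rw [← hD, ← this]
    exact integral_congr_ae (Filter.Eventually.of_forall fun θ => by simp only [happ])
  rw [Finset.sum_congr rfl main, Finset.sum_const, nsmul_eq_mul, ← mul_assoc,
    inv_mul_cancel₀ (by exact_mod_cast hcard0), one_mul]
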